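/- Let x be an indeterminate commuting with itself and consider the identity, for natural numbers n,m: Σ_{k=0}^{min(n,m)} (−1)^k k! C(n,k) C(m,k) Σ_{j=0}^{min(n−k,m−k)} j! C(n−k,j) C(m−k,j) X_{n−k−j, m−k−j} = X_{n,m} for any doubly-indexed family X; i.e., the transformation T(X)_{n,m} = Σ_k k! C(n,k) C(m,k) X_{n−k,m−k} is inverted by S(X)_{n,m} = Σ_k (−1)^k k! C(n,k) C(m,k) X_{n−k,m−k}. -/

import Mathlib

open Finset

lemma tri_sum (f : ℕ → ℕ → ℝ) : ∀ N : ℕ,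
    ∑ k ∈ Finset.range (N+1), ∑ j ∈ Finset.range (N-k+1), f k j
    = ∑ l ∈ Finset.range (N+1), ∑ k ∈ Finset.range (l+1), f k (l-k) := by
  intro N
  induction N with
  | zero => simp
  | succ N ih =>
    have h1 : ∑ k ∈ range (N+1+1), ∑ j ∈ range (N+1-k+1), f k j
        = (∑ k ∈ range (N+1), ∑ j ∈ range (N-k+1), f k j)
          + ∑ k ∈ range (N+1+1), f k (N+1-k) := by
      rw [Finset.sum_range_succ, Finset.sum_range_succ (f := fun k => f k (N+1-k))]
      have h2 : ∀ k ∈ Finset.range (N+1), ∑ j ∈ Finset.range (N+1-k+1), f k j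
          = ∑ j ∈ Finset.range (N-k+1), f k j + f k (N+1-k) := by
        intro k hk
        have hk' : k ≤ N := Nat.lt_succ_iff.mp (Finset.mem_range.mp hk)
        have h3 : N+1-k+1 = (N-k+1)+1 := by omega
        rw [h3, Finset.sum_range_succ]
        congr 2
        omega
      rw [Finset.sum_congr rfl h2, Finset.sum_add_distrib]
      simp
      ring
    rw [h1, ih]
    conv_rhs => rw [Finset.sum_range_succ]

/-- the transformation `T(X)_{n,m} = Σ_k k!·C(n,k)·C(m,k)·X_{n−k,m−k}`
is inverted by `S(X)_{n,m} = Σ_k (−1)^k·k!·C(n,k)·C(m,k)·X_{n−k,m−k}`. -/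
theorem inverse_reordering_transform (X : ℕ → ℕ → ℝ) (n m : ℕ) :
    ∑ k ∈ Finset.range (min n m + 1),
      (-1 : ℝ) ^ k * k.factorial * n.choose k * m.choose k *
        ∑ j ∈ Finset.range (min (n - k) (m - k) + 1),
          (j.factorial : ℝ) * (n - k).choose j * (m - k).choose j *
            X (n - k - j) (m - k - j)
      = X n m := by
  have hNn : min n m ≤ n := Nat.min_le_left n m
  have hNm : min n m ≤ m := Nat.min_le_right n m
  set N := min n m with hN
  set f : ℕ → ℕ → ℝ := fun k j =>
    (-1:ℝ)^k * k.factorial * n.choose k * m.choose k *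
      ((j.factorial : ℝ) * (n-k).choose j * (m-k).choose j * X (n-k-j) (m-k-j)) with hf
  have step1 : ∑ k ∈ Finset.range (N + 1),
      (-1 : ℝ) ^ k * k.factorial * n.choose k * m.choose k *
        ∑ j ∈ Finset.range (min (n - k) (m - k) + 1),
          (j.factorial : ℝ) * (n - k).choose j * (m - k).choose j *
            X (n - k - j) (m - k - j)
      = ∑ k ∈ Finset.range (N+1), ∑ j ∈ Finset.range (N-k+1), f k j := by
    refine Finset.sum_congr rfl fun k hk => ?_
    have hk' : k ≤ N := Nat.lt_succ_iff.mp (Finset.mem_range.mp hk)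
    have hmin : min (n-k) (m-k) = N - k := by omega
    rw [hmin, Finset.mul_sum]
  rw [step1, tri_sum]
  have key : ∀ l ∈ Finset.range (N+1), ∑ k ∈ Finset.range (l+1), f k (l-k)
      = (if l = 0 then (1:ℝ) else 0) *
          ((l.factorial : ℝ) * n.choose l * m.choose l * X (n-l) (m-l)) := by
    intro l hl
    have hl' : l ≤ N := Nat.lt_succ_iff.mp (Finset.mem_range.mp hl)
    have hln : l ≤ n := le_trans hl' hNn
    have hlm : l ≤ m := le_trans hl' hNm
    have term : ∀ k ∈ Finset.range (l+1), f k (l-k)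
        = ((-1:ℝ)^k * l.choose k) *
            ((l.factorial : ℝ) * n.choose l * m.choose l * X (n-l) (m-l)) := by
      intro k hk
      have hkl : k ≤ l := Nat.lt_succ_iff.mp (Finset.mem_range.mp hk)
      have e1 : n.choose k * (n-k).choose (l-k) = n.choose l * l.choose k :=
        (Nat.choose_mul hkl).symm
      have e2 : m.choose k * (m-k).choose (l-k) = m.choose l * l.choose k :=
        (Nat.choose_mul hkl).symm
      have e3 : l.choose k * k.factorial * (l-k).factorial = l.factorial :=
        Nat.choose_mul_factorial_mul_factorial hkl
      have eX : n - k - (l-k) = n - l := by omega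
      have eY : m - k - (l-k) = m - l := by omega
      have enat : k.factorial * (l-k).factorial *
          (n.choose k * (n-k).choose (l-k)) * (m.choose k * (m-k).choose (l-k))
          = (l.factorial * l.choose k) * (n.choose l * m.choose l) := by
        rw [e1, e2, ← e3]; ring
      have enat' : (k.factorial : ℝ) * (l-k).factorial *
          (n.choose k * (n-k).choose (l-k)) * (m.choose k * (m-k).choose (l-k))
          = ((l.factorial : ℝ) * l.choose k) * (n.choose l * m.choose l) := by
        exact_mod_cast congrArg (Nat.cast : ℕ → ℝ) enat
      simp only [hf, eX, eY]
      calc (-1:ℝ)^k * k.factorial * n.choose k * m.choose k *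
            ((((l-k).factorial : ℝ)) * (n-k).choose (l-k) * (m-k).choose (l-k) * X (n-l) (m-l))
          = (-1:ℝ)^k * ((k.factorial : ℝ) * (l-k).factorial *
              (n.choose k * (n-k).choose (l-k)) * (m.choose k * (m-k).choose (l-k)))
              * X (n-l) (m-l) := by ring
        _ = _ := by rw [enat']; ring
    rw [Finset.sum_congr rfl term, ← Finset.sum_mul]
    congr 1
    have := @Int.alternating_sum_range_choose l
    have h2 : ((∑ i ∈ Finset.range (l + 1), (-1:ℤ) ^ i * ↑(l.choose i) : ℤ) : ℝ)
        = ((if l = 0 then (1:ℤ) else 0 : ℤ) : ℝ) := by exact_mod_cast congrArg (Int.cast : ℤ → ℝ) this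
    push_cast at h2
    simpa using h2
  rw [Finset.sum_congr rfl key, Finset.sum_eq_single 0]
  · simp
  · intro b _ hb; simp [hb]
  · intro h; exact absurd (Finset.mem_range.mpr (Nat.succ_pos N)) h
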